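/- Let n₁ and a be positive integers, set b = 2a+1, n₂ = b·n₁ and m = 2b, and define ξ_k : [0,1] → [0,1] by ξ_k(x) = x/2 for 1 ≤ k ≤ b, ξ_{b+1}(x) = 1/2 for all x, and ξ_k(x) = (x+1)/2 for b+2 ≤ k ≤ 2b. Let u be any continuous map from [0,1] into the unitary group of M_{(b+1)·n₂}(ℂ) such that the standard-form map φ(f)(x) = u(x)·diag(f(ξ₁(x)),…,f(ξ_m(x)))·u(x)* sends A(n₁,(a+1)·n₁) into A(n₂,(b+1)·n₂). Then the images of the roots of h form an approximate unit of A(n₂,(b+1)·n₂): for every g ∈ A(n₂,(b+1)·n₂), ‖φ(h^{1/r})·g − g‖ → 0 as r → ∞. -/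

import Mathlib

open scoped Matrix.Norms.L2Operator ComplexOrder
open Filter MeasureTheory

noncomputable section

/-- The unit interval `[0,1]`. -/
abbrev I01 : Type := unitInterval

/-- Square complex matrices of size `N`. -/
abbrev Mat (N : ℕ) : Type := Matrix (Fin N) (Fin N) ℂ

/-- Block-diagonal matrix with `m` diagonal blocks of size `k` (block `0` in the upper left),
realized as an `N × N` matrix, where `h : k * m = N`. -/
def cdiag {k m N : ℕ} (h : k * m = N) (blocks : Fin m → Mat k) : Mat N :=
  Matrix.reindex (finProdFinEquiv.trans (finCongr h)) (finProdFinEquiv.trans (finCongr h))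
    (Matrix.blockDiagonal blocks)

/-- The Razak building block `A(n, n')` with `n' = n * (a + 1)`, realized as a subset of
`C([0,1], M_N(ℂ))` where `h : n * (a + 1) = N`: those continuous matrix-valued functions `f`
for which there is `c ∈ M_n(ℂ)` with `f 0 = diag(c, …, c, 0_n)` (`a` copies of `c`) and
`f 1 = diag(c, …, c)` (`a + 1` copies of `c`). -/
def razakA (n a : ℕ) {N : ℕ} (h : n * (a + 1) = N) : Set C(I01, Mat N) :=
  {f | ∃ c : Mat n,
    f 0 = cdiag h (fun i : Fin (a + 1) => if (i : ℕ) < a then c else 0) ∧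
    f 1 = cdiag h (fun _ : Fin (a + 1) => c)}

/-- The normalized trace of a square complex matrix. -/
def ntr {N : ℕ} (M : Mat N) : ℂ := M.trace / N

namespace RazakAux

open Matrix

def fe {k m N : ℕ} (h : k * m = N) : Fin k × Fin m ≃ Fin N := finProdFinEquiv.trans (finCongr h)

lemma cdiag_eq {k m N : ℕ} (h : k * m = N) (blocks : Fin m → Mat k) :
    cdiag h blocks = (Matrix.blockDiagonal blocks).submatrix (fe h).symm (fe h).symm := rfl

lemma cdiag_mul {k m N : ℕ} (h : k * m = N) (A B : Fin m → Mat k) :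
    cdiag h A * cdiag h B = cdiag h (fun j => A j * B j) := by
  simp only [cdiag_eq, Matrix.submatrix_mul_equiv, Matrix.blockDiagonal_mul]

lemma cdiag_one {k m N : ℕ} (h : k * m = N) :
    cdiag h (fun _ => (1 : Mat k)) = 1 := by
  have : (fun _ : Fin m => (1 : Mat k)) = 1 := rfl
  rw [cdiag_eq, this, Matrix.blockDiagonal_one, Matrix.submatrix_one_equiv]

lemma cdiag_zero {k m N : ℕ} (h : k * m = N) :
    cdiag h (fun _ => (0 : Mat k)) = 0 := by
  have : (fun _ : Fin m => (0 : Mat k)) = 0 := rfl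
  rw [cdiag_eq, this, Matrix.blockDiagonal_zero]
  rfl

lemma cdiag_star {k m N : ℕ} (h : k * m = N) (A : Fin m → Mat k) :
    star (cdiag h A) = cdiag h (fun j => star (A j)) := by
  simp only [cdiag_eq, Matrix.star_eq_conjTranspose, Matrix.conjTranspose_submatrix,
    Matrix.blockDiagonal_conjTranspose]

lemma cdiag_trace {k m N : ℕ} (h : k * m = N) (A : Fin m → Mat k) :
    (cdiag h A).trace = ∑ j, (A j).trace := by
  rw [cdiag_eq, ← Matrix.trace_blockDiagonal]
  simp only [Matrix.trace, Matrix.diag, Matrix.submatrix_apply]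
  exact Equiv.sum_comp (fe h).symm (fun i => Matrix.blockDiagonal A i i)

lemma cdiag_diagonal {k m N : ℕ} (h : k * m = N) (v : Fin m → Fin k → ℂ) :
    cdiag h (fun j => Matrix.diagonal (v j)) =
      Matrix.diagonal (fun p => v ((fe h).symm p).2 ((fe h).symm p).1) := by
  rw [cdiag_eq, Matrix.blockDiagonal_diagonal, Matrix.submatrix_diagonal_equiv]
  rfl

lemma norm_diagonal_le {N : ℕ} (v : Fin N → ℂ) {C : ℝ} (hC : 0 ≤ C)
    (hv : ∀ p, ‖v p‖ ≤ C) : ‖Matrix.diagonal v‖ ≤ C := by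
  rw [Matrix.l2_opNorm_def]
  refine ContinuousLinearMap.opNorm_le_bound _ hC fun x => ?_
  set y := (LinearEquiv.trans Matrix.toEuclideanLin LinearMap.toContinuousLinearMap)
      (Matrix.diagonal v) x with hy
  have hcoord : ∀ i, y i = v i * x i := by
    intro i
    show ((Matrix.diagonal v).mulVec (fun j => x j)) i = _
    rw [Matrix.mulVec_diagonal]
  rw [EuclideanSpace.norm_eq, EuclideanSpace.norm_eq]
  calc √(∑ i, ‖y i‖ ^ 2) ≤ √(∑ i, C^2 * ‖x i‖ ^ 2) := by
        apply Real.sqrt_le_sqrt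
        apply Finset.sum_le_sum
        intro i _
        rw [hcoord i, norm_mul, mul_pow]
        have := hv i
        have h2 : ‖v i‖^2 ≤ C^2 := by nlinarith [norm_nonneg (v i)]
        nlinarith [sq_nonneg (‖x i‖), norm_nonneg (x i)]
    _ = C * √(∑ i, ‖x i‖ ^ 2) := by
        rw [← Finset.mul_sum, Real.sqrt_mul (by positivity), Real.sqrt_sq hC]

lemma eq_zero_of_star_mul_self_eq_self_of_trace_eq_zero {N : ℕ}
    (F : Mat N) (h1 : star F * F = F) (h2 : F.trace = 0) : F = 0 := by
  have key : (star F * F).trace = 0 := by rw [h1, h2]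
  have expand : (star F * F).trace = ∑ j, ∑ i, (Complex.normSq (F i j) : ℂ) := by
    simp only [Matrix.trace, Matrix.diag, Matrix.mul_apply, Matrix.star_eq_conjTranspose,
      Matrix.conjTranspose_apply]
    congr 1; funext j; congr 1; funext i
    rw [Complex.star_def, ← Complex.normSq_eq_conj_mul_self]
  rw [expand] at key
  have key2 : (∑ j, ∑ i, Complex.normSq (F i j)) = 0 := by
    have := congrArg Complex.re key
    simpa [Complex.ofReal_sum] using this
  have hz : ∀ j ∈ Finset.univ, ∀ i ∈ Finset.univ, Complex.normSq (F i j) = 0 := by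
    intro j _
    have hj := (Finset.sum_eq_zero_iff_of_nonneg (fun j _ => Finset.sum_nonneg
      (fun i _ => Complex.normSq_nonneg _))).mp key2 j (Finset.mem_univ j)
    exact fun i _ => (Finset.sum_eq_zero_iff_of_nonneg
      (fun i _ => Complex.normSq_nonneg _)).mp hj i (Finset.mem_univ i)
  ext i j
  exact Complex.normSq_eq_zero.mp (hz j (Finset.mem_univ j) i (Finset.mem_univ i))

lemma smul_one_diag {n : ℕ} (s : ℂ) :
    s • (1 : Mat n) = Matrix.diagonal (fun _ => s) := by
  rw [← Matrix.diagonal_one, ← Matrix.diagonal_smul]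
  simp [Pi.smul_def]

lemma tendsto_rpow_one_div {c : ℝ} (hc : 0 < c) :
    Tendsto (fun r : ℕ => c ^ ((1 : ℝ) / (r : ℝ))) atTop (nhds 1) := by
  have h0 : Tendsto (fun r : ℕ => Real.log c * ((1 : ℝ) / (r : ℝ))) atTop (nhds 0) := by
    simpa using (tendsto_one_div_atTop_nhds_zero_nat).const_mul (Real.log c)
  have := (Real.continuous_exp.tendsto 0).comp h0
  simp only [Function.comp_def, Real.exp_zero] at this
  refine this.congr fun r => ?_
  rw [Real.rpow_def_of_pos hc]

/-! Index functions -/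

def jdxf (n₁ a : ℕ) (q : Fin (n₁ * (a + 1))) : Fin (a + 1) :=
  ((fe (rfl : n₁ * (a + 1) = n₁ * (a + 1))).symm q).2

def idx1f (n₁ a : ℕ) (p : Fin (n₁ * (a + 1) * (2 * (2 * a + 1)))) : Fin (n₁ * (a + 1)) :=
  ((fe (rfl : n₁ * (a + 1) * (2 * (2 * a + 1)) = n₁ * (a + 1) * (2 * (2 * a + 1)))).symm p).1

def idx2f (n₁ a : ℕ) (p : Fin (n₁ * (a + 1) * (2 * (2 * a + 1)))) : Fin (2 * (2 * a + 1)) :=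
  ((fe (rfl : n₁ * (a + 1) * (2 * (2 * a + 1)) = n₁ * (a + 1) * (2 * (2 * a + 1)))).symm p).2

def dvecf (n₁ a : ℕ) (s : Fin (2 * (2 * a + 1)) → ℂ) :
    Fin (n₁ * (a + 1) * (2 * (2 * a + 1))) → ℂ :=
  fun p => if (jdxf n₁ a (idx1f n₁ a p) : ℕ) < a then 1 else s (idx2f n₁ a p)

lemma cdiag_scalarBlocks (n₁ a : ℕ) (s : Fin (2 * (2 * a + 1)) → ℂ) :
    cdiag rfl (fun k : Fin (2 * (2 * a + 1)) =>
      (Matrix.diagonal (fun q : Fin (n₁ * (a + 1)) =>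
        if (jdxf n₁ a q : ℕ) < a then (1 : ℂ) else s k))) =
    Matrix.diagonal (dvecf n₁ a s) := by
  rw [cdiag_diagonal]
  rfl

lemma norm_diag_dvec_sub_one_le (n₁ a : ℕ) (s : Fin (2 * (2 * a + 1)) → ℂ) {C : ℝ}
    (hC : 0 ≤ C) (hs : ∀ k, ‖s k - 1‖ ≤ C) :
    ‖Matrix.diagonal (dvecf n₁ a s) - 1‖ ≤ C := by
  rw [← Matrix.diagonal_one, Matrix.diagonal_sub]
  apply norm_diagonal_le _ hC
  intro p
  unfold dvecf
  split_ifs with h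
  · simpa using hC
  · exact hs _

lemma norm_diag_dvec_sub_one_mul_pattern_le (n₁ a : ℕ) (s : Fin (2 * (2 * a + 1)) → ℂ) {C : ℝ}
    (hC : 0 ≤ C) (hs : ∀ k : Fin (2 * (2 * a + 1)), ¬((k : ℕ) < 2 * a + 1) → ‖s k - 1‖ ≤ C) :
    ‖(Matrix.diagonal (dvecf n₁ a s) - 1) *
      Matrix.diagonal (dvecf n₁ a (fun k => if (k : ℕ) < 2 * a + 1 then 0 else 1))‖ ≤ C := by
  rw [← Matrix.diagonal_one, Matrix.diagonal_sub, Matrix.diagonal_mul_diagonal]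
  apply norm_diagonal_le _ hC
  intro p
  unfold dvecf
  split_ifs with h
  · simpa using hC
  · by_cases h2 : ((idx2f n₁ a p : ℕ)) < 2 * a + 1
    · beta_reduce
      rw [if_pos h2, mul_zero]
      simpa using hC
    · beta_reduce
      rw [if_neg h2, mul_one]
      exact hs _ h2

/-! Sum lemmas -/

lemma sum_fin_ite (c : ℕ) (A B : ℂ) :
    ∑ i : Fin (c + 1), (if (i : ℕ) < c then A else B) = c • A + B := by
  rw [Fin.sum_univ_eq_sum_range (fun j => if j < c then A else B) (c + 1),
    Finset.sum_range_succ, if_neg (lt_irrefl c)]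
  congr 1
  rw [Finset.sum_congr rfl (fun j hj => if_pos (Finset.mem_range.mp hj)), Finset.sum_const,
    Finset.card_range]

lemma sum_fin_ite2 (c : ℕ) (A B : ℂ) :
    ∑ k : Fin (2 * c), (if (k : ℕ) < c then A else B) = c • A + c • B := by
  rw [Fin.sum_univ_eq_sum_range (fun j => if j < c then A else B) (2 * c), two_mul,
    Finset.sum_range_add]
  congr 1
  · rw [Finset.sum_congr rfl (fun j hj => if_pos (Finset.mem_range.mp hj)), Finset.sum_const,
      Finset.card_range]
  · rw [Finset.sum_congr rfl (fun j _ => if_neg (by omega)), Finset.sum_const,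
      Finset.card_range]

lemma sum_jdx (n₁ a : ℕ) (z : ℂ) :
    ∑ q : Fin (n₁ * (a + 1)), (if (jdxf n₁ a q : ℕ) < a then (1 : ℂ) else z) =
      (n₁ * a : ℕ) + (n₁ : ℂ) * z := by
  rw [← Equiv.sum_comp (fe (rfl : n₁ * (a + 1) = n₁ * (a + 1)))
    (fun q => if (jdxf n₁ a q : ℕ) < a then (1 : ℂ) else z)]
  simp only [jdxf, Equiv.symm_apply_apply]
  rw [Fintype.sum_prod_type]
  have inner : ∀ i : Fin n₁, ∑ j : Fin (a + 1), (if (j : ℕ) < a then (1 : ℂ) else z)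
      = a • (1 : ℂ) + z := fun _ => sum_fin_ite a 1 z
  rw [Finset.sum_congr rfl (fun i _ => inner i), Finset.sum_const, Finset.card_univ,
    Fintype.card_fin]
  push_cast
  ring

lemma sum_dvecf (n₁ a : ℕ) (s : Fin (2 * (2 * a + 1)) → ℂ) :
    ∑ p, dvecf n₁ a s p = (2 * (2 * a + 1) * (n₁ * a) : ℕ) + (n₁ : ℂ) * ∑ k, s k := by
  rw [← Equiv.sum_comp (fe (rfl : n₁ * (a + 1) * (2 * (2 * a + 1)) =
    n₁ * (a + 1) * (2 * (2 * a + 1)))) (dvecf n₁ a s)]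
  simp only [dvecf, jdxf, idx1f, idx2f, Equiv.symm_apply_apply]
  rw [Fintype.sum_prod_type, Finset.sum_comm]
  have inner : ∀ k : Fin (2 * (2 * a + 1)),
      (∑ q : Fin (n₁ * (a + 1)),
        (if ((((fe (rfl : n₁ * (a + 1) = n₁ * (a + 1))).symm q).2 : ℕ)) < a then (1 : ℂ) else s k))
      = (n₁ * a : ℕ) + (n₁ : ℂ) * s k := fun k => sum_jdx n₁ a (s k)
  rw [Finset.sum_congr rfl (fun k _ => inner k), Finset.sum_add_distrib, Finset.sum_const,
    Finset.card_univ, Fintype.card_fin, ← Finset.mul_sum]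
  push_cast
  ring

lemma norm_coe_rpow_sub_one_le {t clow : ℝ} (ht0 : 0 ≤ t) (ht1 : t ≤ 1) {e : ℝ} (he : 0 ≤ e)
    (hclow : 0 ≤ clow) (hlow : clow ≤ t) :
    ‖((t ^ e : ℝ) : ℂ) - 1‖ ≤ 1 - clow ^ e := by
  have h1 : t ^ e ≤ 1 := Real.rpow_le_one ht0 ht1 he
  have h2 : clow ^ e ≤ t ^ e := Real.rpow_le_rpow hclow hlow he
  have h3 : ((t ^ e : ℝ) : ℂ) - 1 = (((t ^ e - 1 : ℝ)) : ℂ) := by push_cast; ring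
  rw [h3, Complex.norm_real, Real.norm_eq_abs, abs_of_nonpos (by linarith)]
  linarith

lemma norm_coe_rpow_sub_one_le' {t : ℝ} (ht0 : 0 ≤ t) (ht1 : t ≤ 1) {e : ℝ} (he : 0 ≤ e) :
    ‖((t ^ e : ℝ) : ℂ) - 1‖ ≤ 1 := by
  have h1 : t ^ e ≤ 1 := Real.rpow_le_one ht0 ht1 he
  have h0 : 0 ≤ t ^ e := Real.rpow_nonneg ht0 e
  have h3 : ((t ^ e : ℝ) : ℂ) - 1 = (((t ^ e - 1 : ℝ)) : ℂ) := by push_cast; ring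
  rw [h3, Complex.norm_real, Real.norm_eq_abs, abs_of_nonpos (by linarith)]
  linarith

end RazakAux

open RazakAux in
set_option maxHeartbeats 1000000 in
/-- for the concrete connecting map `φ : A(n₁,(a+1)n₁) → A(n₂,(b+1)n₂)`
(`b = 2a+1`, `n₂ = b·n₁`, `m = 2b`, with the concrete maps `ξ_k`), the images `φ(h^{1/r})` of
the roots of the canonical self-adjoint element form an approximate unit of `A(n₂,(b+1)n₂)`. -/
theorem razak_image_approximate_unit (n₁ a : ℕ) (hn : 0 < n₁) (ha : 0 < a)
    (ξ : Fin (2 * (2 * a + 1)) → I01 → I01)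
    (hξ : ∀ (k : Fin (2 * (2 * a + 1))) (x : I01),
      ((ξ k x : ℝ)) = if (k : ℕ) < 2 * a + 1 then (x : ℝ) / 2
        else if (k : ℕ) = 2 * a + 1 then 1 / 2 else ((x : ℝ) + 1) / 2)
    (u : C(I01, Mat (n₁ * (a + 1) * (2 * (2 * a + 1)))))
    (hu : ∀ x : I01, u x ∈ Matrix.unitaryGroup (Fin (n₁ * (a + 1) * (2 * (2 * a + 1)))) ℂ)
    (Φ : C(I01, Mat (n₁ * (a + 1))) → C(I01, Mat (n₁ * (a + 1) * (2 * (2 * a + 1)))))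
    (hΦ : ∀ (f : C(I01, Mat (n₁ * (a + 1)))) (x : I01),
      Φ f x = u x * cdiag rfl (fun k => f (ξ k x)) * star (u x))
    (hinto : ∀ f ∈ razakA n₁ a rfl,
      Φ f ∈ razakA (n₁ * (2 * a + 1)) (2 * a + 1)
        (show n₁ * (2 * a + 1) * (2 * a + 1 + 1) = n₁ * (a + 1) * (2 * (2 * a + 1)) by ring))
    (H : ℕ → C(I01, Mat (n₁ * (a + 1))))
    (hH : ∀ (r : ℕ) (t : I01), H r t = cdiag rfl (fun i : Fin (a + 1) =>
      if (i : ℕ) < a then (1 : Mat n₁)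
      else ((((t : ℝ) ^ ((1 : ℝ) / (r : ℝ))) : ℝ) : ℂ) • (1 : Mat n₁))) :
    ∀ g ∈ razakA (n₁ * (2 * a + 1)) (2 * a + 1)
        (show n₁ * (2 * a + 1) * (2 * a + 1 + 1) = n₁ * (a + 1) * (2 * (2 * a + 1)) by ring),
      Tendsto (fun r : ℕ => ‖Φ (H r) * g - g‖) atTop (nhds 0) := by
  intro g hg
  obtain ⟨c, hg0, hg1⟩ := hg
  have hN : n₁ * (2 * a + 1) * (2 * a + 1 + 1) = n₁ * (a + 1) * (2 * (2 * a + 1)) := by ring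
  have h1 : star (u 0) * u 0 = 1 := Matrix.mem_unitaryGroup_iff'.mp (hu 0)
  have h2 : u 0 * star (u 0) = 1 := Matrix.mem_unitaryGroup_iff.mp (hu 0)
  haveI : Nonempty (Fin (n₁ * (a + 1) * (2 * (2 * a + 1)))) := ⟨⟨0, by positivity⟩⟩
  have hnormu : ∀ x : I01, ‖u x‖ = 1 := fun x =>
    CStarRing.norm_of_mem_unitary (Unitary.mem_iff.mpr
      ⟨Matrix.mem_unitaryGroup_iff'.mp (hu x), Matrix.mem_unitaryGroup_iff.mp (hu x)⟩)
  have hcoe0 : ((0 : I01) : ℝ) = 0 := rfl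
  have hcoe1 : ((1 : I01) : ℝ) = 1 := rfl
  -- diagonal representation of H r t
  have hHdiag : ∀ (r : ℕ) (t : I01), H r t = Matrix.diagonal
      (fun q : Fin (n₁ * (a + 1)) => if (jdxf n₁ a q : ℕ) < a then (1 : ℂ)
        else (((t : ℝ) ^ ((1 : ℝ) / (r : ℝ)) : ℝ) : ℂ)) := by
    intro r t
    rw [hH r t]
    rw [show (fun i : Fin (a + 1) => if (i : ℕ) < a then (1 : Mat n₁)
        else ((((t : ℝ) ^ ((1 : ℝ) / (r : ℝ)) : ℝ)) : ℂ) • (1 : Mat n₁)) =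
        (fun i : Fin (a + 1) => Matrix.diagonal (fun _ : Fin n₁ =>
          if (i : ℕ) < a then (1 : ℂ) else ((((t : ℝ) ^ ((1 : ℝ) / (r : ℝ)) : ℝ)) : ℂ))) from ?_]
    · rw [cdiag_diagonal]
      rfl
    · funext i
      split_ifs with h
      · exact Matrix.diagonal_one.symm
      · exact smul_one_diag _
  have hDdiag : ∀ (r : ℕ) (x : I01),
      (cdiag rfl (fun k : Fin (2 * (2 * a + 1)) => H r (ξ k x))
        : Mat (n₁ * (a + 1) * (2 * (2 * a + 1)))) =
      Matrix.diagonal (dvecf n₁ a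
        (fun k => (((ξ k x : ℝ) ^ ((1 : ℝ) / (r : ℝ)) : ℝ) : ℂ))) := by
    intro r x
    rw [show (fun k : Fin (2 * (2 * a + 1)) => H r (ξ k x)) =
      (fun k : Fin (2 * (2 * a + 1)) => Matrix.diagonal (fun q : Fin (n₁ * (a + 1)) =>
        if (jdxf n₁ a q : ℕ) < a then (1 : ℂ)
        else (((ξ k x : ℝ) ^ ((1 : ℝ) / (r : ℝ)) : ℝ) : ℂ))) from
      funext fun k => hHdiag r (ξ k x)]
    exact cdiag_scalarBlocks n₁ a _
  -- the corner projection Q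
  obtain ⟨Q, hQdef⟩ : ∃ Q', Q' = cdiag hN (fun i : Fin (2 * a + 1 + 1) =>
      if (i : ℕ) < 2 * a + 1 then (0 : Mat (n₁ * (2 * a + 1))) else 1) := ⟨_, rfl⟩
  have hQmulz : ∀ M : Mat (n₁ * (2 * a + 1)),
      Q * cdiag hN (fun i : Fin (2 * a + 1 + 1) =>
        if (i : ℕ) < 2 * a + 1 then M else 0) = 0 := by
    intro M
    rw [hQdef, cdiag_mul]
    rw [show (fun i : Fin (2 * a + 1 + 1) =>
        (if (i : ℕ) < 2 * a + 1 then (0 : Mat (n₁ * (2 * a + 1))) else 1) *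
        (if (i : ℕ) < 2 * a + 1 then M else 0)) =
        (fun _ : Fin (2 * a + 1 + 1) => (0 : Mat (n₁ * (2 * a + 1)))) from
      funext fun i => by split_ifs <;> simp]
    exact cdiag_zero hN
  have hQg0 : Q * g 0 = 0 := by rw [hg0]; exact hQmulz c
  -- H 1 belongs to the Razak algebra
  have hH1mem : H 1 ∈ razakA n₁ a rfl := by
    refine ⟨1, ?_, ?_⟩
    · rw [hH 1 0]
      refine congrArg (cdiag rfl) (funext fun i => ?_)
      split_ifs with h
      · rfl
      · have hz : ((0 : I01) : ℝ) ^ ((1 : ℝ) / ((1 : ℕ) : ℝ)) = 0 := by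
          rw [hcoe0]
          apply Real.zero_rpow
          norm_num
        rw [hz]
        norm_num
    · rw [hH 1 1]
      refine congrArg (cdiag rfl) (funext fun i => ?_)
      split_ifs with h
      · rfl
      · have hz : ((1 : I01) : ℝ) ^ ((1 : ℝ) / ((1 : ℕ) : ℝ)) = 1 := by
          rw [hcoe1, Real.one_rpow]
        rw [hz]
        norm_num
  obtain ⟨c₁, hc₁0, -⟩ := hinto (H 1) hH1mem
  obtain ⟨D₁, hD₁def⟩ : ∃ D', D' = (cdiag rfl (fun k : Fin (2 * (2 * a + 1)) => H 1 (ξ k 0))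
      : Mat (n₁ * (a + 1) * (2 * (2 * a + 1)))) := ⟨_, rfl⟩
  have hQΦ0 : Q * (u 0 * D₁ * star (u 0)) = 0 := by
    rw [hD₁def, ← hΦ (H 1) 0, hc₁0]
    exact hQmulz c₁
  have hD₁diag : D₁ = Matrix.diagonal (dvecf n₁ a
      (fun k => (((ξ k 0 : ℝ) ^ ((1 : ℝ) / ((1 : ℕ) : ℝ)) : ℝ) : ℂ))) := by
    rw [hD₁def]; exact hDdiag 1 0
  obtain ⟨P₀, hP₀def⟩ : ∃ P', P' = (Matrix.diagonal (dvecf n₁ a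
      (fun k => if (k : ℕ) < 2 * a + 1 then (0 : ℂ) else 1))
      : Mat (n₁ * (a + 1) * (2 * (2 * a + 1)))) := ⟨_, rfl⟩
  obtain ⟨Dinv, hDinvdef⟩ : ∃ D', D' = (Matrix.diagonal (dvecf n₁ a
      (fun k => if (k : ℕ) < 2 * a + 1 then (0 : ℂ) else 2))
      : Mat (n₁ * (a + 1) * (2 * (2 * a + 1)))) := ⟨_, rfl⟩
  have hE1 : ((1 : ℝ) / ((1 : ℕ) : ℝ)) = 1 := by norm_num
  have hDprod : D₁ * Dinv = P₀ := by
    rw [hD₁diag, hDinvdef, hP₀def, Matrix.diagonal_mul_diagonal]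
    refine congrArg Matrix.diagonal (funext fun p => ?_)
    unfold dvecf
    beta_reduce
    by_cases h : (jdxf n₁ a (idx1f n₁ a p) : ℕ) < a
    · rw [if_pos h, if_pos h, if_pos h, mul_one]
    · rw [if_neg h, if_neg h, if_neg h]
      rw [hξ (idx2f n₁ a p) 0, hE1, Real.rpow_one]
      by_cases h2 : ((idx2f n₁ a p : ℕ)) < 2 * a + 1
      · rw [if_pos h2, if_pos h2, if_pos h2, mul_zero]
      · rw [if_neg h2, if_neg h2, if_neg h2]
        by_cases h3 : ((idx2f n₁ a p : ℕ)) = 2 * a + 1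
        · rw [if_pos h3]
          push_cast
          norm_num
        · rw [if_neg h3, hcoe0]
          push_cast
          norm_num
  have hQUP : Q * (u 0 * P₀) = 0 := by
    have e1 : Q * (u 0 * P₀) = (Q * (u 0 * D₁ * star (u 0))) * (u 0 * Dinv) := by
      rw [← hDprod]
      rw [show (Q * (u 0 * D₁ * star (u 0))) * (u 0 * Dinv) =
        Q * (u 0 * (D₁ * ((star (u 0) * u 0) * Dinv))) from by noncomm_ring, h1, one_mul]
    rw [e1, hQΦ0, zero_mul]
  have hPstar : star P₀ = P₀ := by
    rw [hP₀def, Matrix.star_eq_conjTranspose, Matrix.diagonal_conjTranspose]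
    refine congrArg Matrix.diagonal (funext fun p => ?_)
    simp only [Pi.star_apply]
    unfold dvecf
    split_ifs <;> simp
  have hQstar : star Q = Q := by
    rw [hQdef, cdiag_star]
    refine congrArg (cdiag hN) (funext fun i => ?_)
    split_ifs <;> simp
  have hPP : P₀ * P₀ = P₀ := by
    rw [hP₀def, Matrix.diagonal_mul_diagonal]
    refine congrArg Matrix.diagonal (funext fun p => ?_)
    unfold dvecf
    beta_reduce
    split_ifs <;> norm_num
  have hQQ : Q * Q = Q := by
    rw [hQdef, cdiag_mul]
    refine congrArg (cdiag hN) (funext fun i => ?_)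
    split_ifs <;> simp
  have hPUQ : P₀ * (star (u 0) * Q) = 0 := by
    have hst := congrArg star hQUP
    rw [star_zero, star_mul, star_mul, hPstar, hQstar] at hst
    calc P₀ * (star (u 0) * Q) = P₀ * star (u 0) * Q := by rw [Matrix.mul_assoc]
      _ = 0 := hst
  have hEstar : star (u 0 * P₀ * star (u 0)) = u 0 * P₀ * star (u 0) := by
    rw [star_mul, star_mul, star_star, hPstar, Matrix.mul_assoc]
  have hEE : (u 0 * P₀ * star (u 0)) * (u 0 * P₀ * star (u 0)) = u 0 * P₀ * star (u 0) := by
    rw [show (u 0 * P₀ * star (u 0)) * (u 0 * P₀ * star (u 0)) =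
      u 0 * (P₀ * ((star (u 0) * u 0) * (P₀ * star (u 0)))) from by noncomm_ring, h1, one_mul,
      show u 0 * (P₀ * (P₀ * star (u 0))) = u 0 * (P₀ * P₀) * star (u 0) from by noncomm_ring,
      hPP]
  have hEQ : (u 0 * P₀ * star (u 0)) * Q = 0 := by
    rw [show (u 0 * P₀ * star (u 0)) * Q = u 0 * (P₀ * (star (u 0) * Q)) from by noncomm_ring,
      hPUQ, mul_zero]
  have hQE : Q * (u 0 * P₀ * star (u 0)) = 0 := by
    have hst := congrArg star hEQ
    rwa [star_zero, star_mul, hEstar, hQstar] at hst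
  have htrP : P₀.trace = ((2 * (2 * a + 1) * (n₁ * a) : ℕ) : ℂ)
      + (n₁ : ℂ) * ((2 * a + 1 : ℕ) : ℂ) := by
    rw [hP₀def, Matrix.trace_diagonal, sum_dvecf, sum_fin_ite2 (2 * a + 1) 0 1]
    simp
  have htrQ : Q.trace = ((n₁ * (2 * a + 1) : ℕ) : ℂ) := by
    rw [hQdef, cdiag_trace]
    have hb : ∀ i : Fin (2 * a + 1 + 1),
        ((if (i : ℕ) < 2 * a + 1 then (0 : Mat (n₁ * (2 * a + 1))) else 1)).trace =
        if (i : ℕ) < 2 * a + 1 then (0 : ℂ) else ((n₁ * (2 * a + 1) : ℕ) : ℂ) := fun i => by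
      split_ifs <;> simp [Matrix.trace_one]
    rw [Finset.sum_congr rfl (fun i _ => hb i), sum_fin_ite (2 * a + 1) 0 _]
    simp
  have htrE : (u 0 * P₀ * star (u 0)).trace = P₀.trace := by
    rw [Matrix.trace_mul_comm (u 0 * P₀) (star (u 0)), ← Matrix.mul_assoc, h1, Matrix.one_mul]
  have htrF : ((1 : Mat (n₁ * (a + 1) * (2 * (2 * a + 1)))) - Q
      - (u 0 * P₀ * star (u 0))).trace = 0 := by
    rw [Matrix.trace_sub, Matrix.trace_sub, Matrix.trace_one, htrE, htrP, htrQ]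
    simp only [Fintype.card_fin]
    push_cast
    ring
  have hFF : ((1 : Mat (n₁ * (a + 1) * (2 * (2 * a + 1)))) - Q - (u 0 * P₀ * star (u 0)))
      * (1 - Q - (u 0 * P₀ * star (u 0))) = 1 - Q - (u 0 * P₀ * star (u 0)) := by
    have expand : ∀ E : Mat (n₁ * (a + 1) * (2 * (2 * a + 1))),
        ((1 : Mat (n₁ * (a + 1) * (2 * (2 * a + 1)))) - Q - E) * (1 - Q - E) =
          (1 - Q - E) + ((Q * Q - Q) + (E * E - E) + (Q * E + E * Q)) := by
      intro E; noncomm_ring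
    rw [expand, hQQ, hEE, hQE, hEQ]
    abel
  have hFstar : star ((1 : Mat (n₁ * (a + 1) * (2 * (2 * a + 1)))) - Q
      - (u 0 * P₀ * star (u 0))) = 1 - Q - (u 0 * P₀ * star (u 0)) := by
    simp only [star_sub, star_one, hQstar, hEstar]
  have hF0 : (1 : Mat (n₁ * (a + 1) * (2 * (2 * a + 1)))) - Q - (u 0 * P₀ * star (u 0)) = 0 :=
    eq_zero_of_star_mul_self_eq_self_of_trace_eq_zero _ (by rw [hFstar, hFF]) htrF
  have hE1Q : (1 : Mat (n₁ * (a + 1) * (2 * (2 * a + 1)))) - Q = u 0 * P₀ * star (u 0) :=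
    sub_eq_zero.mp hF0
  have hEg0 : (u 0 * P₀ * star (u 0)) * g 0 = g 0 := by
    rw [← hE1Q, sub_mul, one_mul, hQg0, sub_zero]
  have hg0P : star (u 0) * g 0 = P₀ * (star (u 0) * g 0) := by
    calc star (u 0) * g 0 = star (u 0) * ((u 0 * P₀ * star (u 0)) * g 0) := by rw [hEg0]
      _ = (star (u 0) * u 0) * (P₀ * (star (u 0) * g 0)) := by noncomm_ring
      _ = P₀ * (star (u 0) * g 0) := by rw [h1, one_mul]
  -- the approximate-unit estimate
  rw [Metric.tendsto_atTop]
  intro ε hε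
  obtain ⟨G, hGdef⟩ : ∃ G', G' = ‖g‖ + 1 := ⟨_, rfl⟩
  have hG : 0 < G := by rw [hGdef]; positivity
  have hgG : ‖g‖ ≤ G := by rw [hGdef]; linarith
  obtain ⟨ε', hε'def⟩ : ∃ e', e' = ε / (4 * G) := ⟨_, rfl⟩
  have hε' : 0 < ε' := by rw [hε'def]; positivity
  have hε'G : ε' * G = ε / 4 := by
    rw [hε'def]
    field_simp
  obtain ⟨δ₁, hδ₁pos, hδ₁⟩ := Metric.continuousAt_iff.mp
    (g.continuous.continuousAt (x := (0 : I01))) (ε / 4) (by positivity)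
  obtain ⟨δ₂, hδ₂pos, hδ₂⟩ := Metric.continuousAt_iff.mp
    (u.continuous.continuousAt (x := (0 : I01))) ε' hε'
  obtain ⟨δ, hδdef⟩ : ∃ d, d = min δ₁ δ₂ := ⟨_, rfl⟩
  have hδpos : 0 < δ := by rw [hδdef]; exact lt_min hδ₁pos hδ₂pos
  obtain ⟨cm, hcmdef⟩ : ∃ cmm, cmm = min δ 1 / 2 := ⟨_, rfl⟩
  have hcm0 : 0 < cm := by
    rw [hcmdef]
    have := lt_min hδpos one_pos
    linarith
  have hcm12 : cm ≤ 1 / 2 := by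
    rw [hcmdef]
    have := min_le_right δ 1
    linarith
  have hcm1 : cm ≤ 1 := by linarith
  obtain ⟨R, hR⟩ := Filter.eventually_atTop.mp ((tendsto_rpow_one_div hcm0).eventually
    (eventually_gt_nhds (show 1 - ε' < 1 by linarith)))
  refine ⟨R, fun r hr => ?_⟩
  have he0 : (0 : ℝ) ≤ (1 : ℝ) / (r : ℝ) := by positivity
  have hcme : 1 - cm ^ ((1 : ℝ) / (r : ℝ)) < ε' := by
    have := hR r hr
    linarith
  have hhalf : (0 : ℝ) ≤ 1 - (1 / 2 : ℝ) ^ ((1 : ℝ) / (r : ℝ)) := by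
    have : (1 / 2 : ℝ) ^ ((1 : ℝ) / (r : ℝ)) ≤ 1 :=
      Real.rpow_le_one (by norm_num) (by norm_num) he0
    linarith
  have hhalfε : 1 - (1 / 2 : ℝ) ^ ((1 : ℝ) / (r : ℝ)) ≤ ε' := by
    have : cm ^ ((1 : ℝ) / (r : ℝ)) ≤ (1 / 2 : ℝ) ^ ((1 : ℝ) / (r : ℝ)) :=
      Real.rpow_le_rpow hcm0.le hcm12 he0
    linarith
  have hstarnorm : ∀ A : Mat (n₁ * (a + 1) * (2 * (2 * a + 1))), ‖star A‖ = ‖A‖ := fun A => by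
    rw [Matrix.star_eq_conjTranspose]
    exact Matrix.l2_opNorm_conjTranspose A
  rw [Real.dist_eq, sub_zero, abs_of_nonneg (norm_nonneg _)]
  have key : ∀ x : I01, ‖(Φ (H r) * g - g) x‖ ≤ 3 * ε / 4 := by
    intro x
    rw [ContinuousMap.sub_apply, ContinuousMap.mul_apply]
    have h2x : u x * star (u x) = 1 := Matrix.mem_unitaryGroup_iff.mp (hu x)
    have hidx : Φ (H r) x * g x - g x =
        u x * ((cdiag rfl (fun k : Fin (2 * (2 * a + 1)) => H r (ξ k x)) - 1) *
          (star (u x) * g x)) := by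
      rw [hΦ (H r) x,
        show u x * ((cdiag rfl (fun k : Fin (2 * (2 * a + 1)) => H r (ξ k x)) - 1) *
            (star (u x) * g x)) =
          u x * cdiag rfl (fun k : Fin (2 * (2 * a + 1)) => H r (ξ k x)) * star (u x) * g x -
          (u x * star (u x)) * g x from by noncomm_ring, h2x, one_mul]
    rw [hidx, hDdiag r x]
    refine le_trans (norm_mul_le _ _) ?_
    rw [hnormu x, one_mul]
    by_cases hx : ((x : ℝ)) < δ
    · -- near 0
      have hdx : dist x (0 : I01) < δ := by
        rw [Subtype.dist_eq, Real.dist_eq, hcoe0, sub_zero, abs_of_nonneg x.2.1]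
        exact hx
      have hgx : ‖g x - g 0‖ < ε / 4 := by
        have := hδ₁ (lt_of_lt_of_le hdx (by rw [hδdef]; exact min_le_left _ _))
        rwa [dist_eq_norm] at this
      have hux : ‖u x - u 0‖ < ε' := by
        have := hδ₂ (lt_of_lt_of_le hdx (by rw [hδdef]; exact min_le_right _ _))
        rwa [dist_eq_norm] at this
      have hnear : ∀ D : Mat (n₁ * (a + 1) * (2 * (2 * a + 1))), ‖D - 1‖ ≤ 1 →
          ‖(D - 1) * P₀‖ ≤ 1 - (1 / 2 : ℝ) ^ ((1 : ℝ) / (r : ℝ)) →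
          ‖(D - 1) * (star (u x) * g x)‖ ≤ 3 * ε / 4 := by
        intro D hD1 hDP
        have hsplit : (D - 1) * (star (u x) * g x) =
            (D - 1) * (star (u x) * (g x - g 0)) +
            ((D - 1) * (star (u x - u 0) * g 0) + ((D - 1) * P₀) * (star (u 0) * g 0)) := by
          rw [show ((D - 1) * P₀) * (star (u 0) * g 0) =
              (D - 1) * (P₀ * (star (u 0) * g 0)) from by noncomm_ring, ← hg0P, star_sub]
          noncomm_ring
        rw [hsplit]
        have ht1 : ‖(D - 1) * (star (u x) * (g x - g 0))‖ ≤ ε / 4 := by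
          refine le_trans (norm_mul_le _ _) ?_
          have hi : ‖star (u x) * (g x - g 0)‖ ≤ ε / 4 := by
            refine le_trans (norm_mul_le _ _) ?_
            rw [hstarnorm, hnormu x, one_mul]
            linarith
          calc ‖D - 1‖ * ‖star (u x) * (g x - g 0)‖ ≤ 1 * (ε / 4) :=
              mul_le_mul hD1 hi (norm_nonneg _) one_pos.le
            _ = ε / 4 := one_mul _
        have ht2 : ‖(D - 1) * (star (u x - u 0) * g 0)‖ ≤ ε / 4 := by
          refine le_trans (norm_mul_le _ _) ?_
          have hi : ‖star (u x - u 0) * g 0‖ ≤ ε' * G := by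
            refine le_trans (norm_mul_le _ _) ?_
            rw [hstarnorm]
            have hg0n : ‖g 0‖ ≤ G := le_trans (g.norm_coe_le_norm 0) hgG
            exact mul_le_mul hux.le hg0n (norm_nonneg _) hε'.le
          calc ‖D - 1‖ * ‖star (u x - u 0) * g 0‖ ≤ 1 * (ε' * G) :=
              mul_le_mul hD1 hi (norm_nonneg _) one_pos.le
            _ = ε / 4 := by rw [one_mul, hε'G]
        have ht3 : ‖((D - 1) * P₀) * (star (u 0) * g 0)‖ ≤ ε / 4 := by
          refine le_trans (norm_mul_le _ _) ?_
          have hi : ‖star (u 0) * g 0‖ ≤ G := by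
            refine le_trans (norm_mul_le _ _) ?_
            rw [hstarnorm, hnormu 0, one_mul]
            exact le_trans (g.norm_coe_le_norm 0) hgG
          calc ‖(D - 1) * P₀‖ * ‖star (u 0) * g 0‖ ≤ ε' * G :=
              mul_le_mul (le_trans hDP hhalfε) hi (norm_nonneg _) hε'.le
            _ = ε / 4 := hε'G
        refine le_trans (norm_add_le _ _) ?_
        have hsum := le_trans (norm_add_le ((D - 1) * (star (u x - u 0) * g 0))
          (((D - 1) * P₀) * (star (u 0) * g 0))) (add_le_add ht2 ht3)
        linarith
      refine hnear _ ?_ ?_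
      · exact norm_diag_dvec_sub_one_le n₁ a _ one_pos.le (fun k =>
          norm_coe_rpow_sub_one_le' (ξ k x).2.1 (ξ k x).2.2 he0)
      · rw [hP₀def]
        refine norm_diag_dvec_sub_one_mul_pattern_le n₁ a _ hhalf ?_
        intro k hk
        refine norm_coe_rpow_sub_one_le (ξ k x).2.1 (ξ k x).2.2 he0 (by norm_num) ?_
        rw [hξ k x, if_neg hk]
        split_ifs
        · norm_num
        · have := x.2.1
          linarith
    · -- away from 0
      have hfar : ∀ k : Fin (2 * (2 * a + 1)), cm ≤ (ξ k x : ℝ) := by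
        intro k
        rw [hξ k x]
        have hxd : δ ≤ (x : ℝ) := not_lt.mp hx
        have hmd : min δ 1 ≤ δ := min_le_left _ _
        have hm1 : min δ 1 ≤ 1 := min_le_right _ _
        split_ifs
        · rw [hcmdef]; linarith
        · rw [hcmdef]; linarith
        · have := x.2.1
          rw [hcmdef]; linarith
      have hcmr1 : cm ^ ((1 : ℝ) / (r : ℝ)) ≤ 1 := Real.rpow_le_one hcm0.le hcm1 he0
      have hD : ‖Matrix.diagonal (dvecf n₁ a
          (fun k => (((ξ k x : ℝ) ^ ((1 : ℝ) / (r : ℝ)) : ℝ) : ℂ))) - 1‖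
          ≤ 1 - cm ^ ((1 : ℝ) / (r : ℝ)) :=
        norm_diag_dvec_sub_one_le n₁ a _ (by linarith) (fun k =>
          norm_coe_rpow_sub_one_le (ξ k x).2.1 (ξ k x).2.2 he0 hcm0.le (hfar k))
      refine le_trans (norm_mul_le _ _) ?_
      have hi : ‖star (u x) * g x‖ ≤ G := by
        refine le_trans (norm_mul_le _ _) ?_
        rw [hstarnorm, hnormu x, one_mul]
        exact le_trans (g.norm_coe_le_norm x) hgG
      have hb1 : ‖Matrix.diagonal (dvecf n₁ a
            (fun k => (((ξ k x : ℝ) ^ ((1 : ℝ) / (r : ℝ)) : ℝ) : ℂ))) - 1‖ *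
          ‖star (u x) * g x‖ ≤ (1 - cm ^ ((1 : ℝ) / (r : ℝ))) * G :=
        mul_le_mul hD hi (norm_nonneg _) (by linarith)
      have hb2 : (1 - cm ^ ((1 : ℝ) / (r : ℝ))) * G ≤ ε' * G :=
        mul_le_mul_of_nonneg_right (by linarith) hG.le
      linarith
  refine lt_of_le_of_lt ((ContinuousMap.norm_le (Φ (H r) * g - g) (by positivity)).mpr key) (by linarith)
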